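/- arXiv:2204.03022 — 6 statements merged into one kernel-verified Lean document; each statement's English description precedes it below -/
import Mathlib

section
/- Under relational composition on X one has P·P = 1, L·L = 1, and L·P·L = P·L·P, where 1 denotes the identity (diagonal) relation on X. -/
namespace CubeDance

/-- The set `X` of the 12 major triads, 12 minor triads, and 4 augmented triads. -/
inductive Triad : Type
  | maj : ZMod 12 → Triad
  | min : ZMod 12 → Triad
  | aug : ZMod 4 → Triad
  deriving DecidableEq

/-- Binary relations on `X`. -/
abbrev RelM : Type := Triad → Triad → Prop

/-- Binary relations on `X` form a monoid under relational composition,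
with identity the diagonal relation. -/
instance : Monoid RelM where
  mul R S := fun p q => ∃ r, R p r ∧ S r q
  one := fun p q => p = q
  mul_assoc R S T := by
    funext p q
    apply propext
    constructor
    · rintro ⟨r, ⟨s, h1, h2⟩, h3⟩
      exact ⟨s, h1, r, h2, h3⟩
    · rintro ⟨s, h1, r, h2, h3⟩
      exact ⟨r, ⟨s, h1, h2⟩, h3⟩
  one_mul R := by
    funext p q
    apply propext
    constructor
    · rintro ⟨r, rfl, h⟩
      exact h
    · intro h
      exact ⟨p, rfl, h⟩
  mul_one R := by
    funext p q
    apply propext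
    constructor
    · rintro ⟨r, h, rfl⟩
      exact h
    · intro h
      exact ⟨q, h, rfl⟩

/-- The relation `U`, relating `a_aug` with `x_M` whenever `x ≡ a (mod 4)` and
`a_aug` with `x_m` whenever `x ≡ a + 1 (mod 4)`. -/
def U : RelM := fun p q =>
  match p, q with
  | .aug a, .maj x => (x.val : ZMod 4) = a
  | .maj x, .aug a => (x.val : ZMod 4) = a
  | .aug a, .min x => (x.val : ZMod 4) = a + 1
  | .min x, .aug a => (x.val : ZMod 4) = a + 1
  | _, _ => False

/-- The relation `P`, relating `x_M` with `x_m`, and each augmented triad with itself. -/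
def P : RelM := fun p q =>
  match p, q with
  | .maj x, .min y => x = y
  | .min x, .maj y => x = y
  | .aug a, .aug b => a = b
  | _, _ => False

/-- The relation `L`, relating `x_M` with `(x+4)_m`, and each augmented triad with itself. -/
def L : RelM := fun p q =>
  match p, q with
  | .maj x, .min y => y = x + 4
  | .min y, .maj x => y = x + 4
  | .aug a, .aug b => a = b
  | _, _ => False

/-- The monoid `M_{U,P,L}` generated by the relations `U`, `P` and `L`. -/
def M : Submonoid RelM := Submonoid.closure {U, P, L}

lemma U_mem : U ∈ M := Submonoid.subset_closure (Set.mem_insert _ _)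

lemma P_mem : P ∈ M :=
  Submonoid.subset_closure (Set.mem_insert_of_mem _ (Set.mem_insert _ _))

lemma L_mem : L ∈ M :=
  Submonoid.subset_closure (Set.mem_insert_of_mem _ (Set.mem_insert_of_mem _ rfl))



lemma z12 : (12 : ZMod 12) = 0 := by decide

lemma one_def : (1 : RelM) = fun p q => p = q := rfl

/-- The relation `L·P·L = P·L·P` explicitly. -/
def Q : RelM := fun p q =>
  match p, q with
  | .maj x, .min y => y = x + 8
  | .min y, .maj x => y = x + 8
  | .aug a, .aug b => a = b
  | _, _ => False

lemma LPL_eq_Q : L * P * L = Q := by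
  funext p q
  apply propext
  constructor
  · rintro ⟨r, ⟨s, h1, h2⟩, h3⟩
    cases p <;> cases s <;> cases r <;> cases q <;>
      first
        | exact h1.elim | exact h2.elim | exact h3.elim
        | (simp only [L, P, Q] at h1 h2 h3 ⊢; subst_vars;
           first | ring1 | (ring_nf; rw [z12, zero_add]))
  · intro h
    cases p <;> cases q <;> try exact h.elim
    case maj.min x y =>
      replace h : y = x + 8 := h
      subst h
      exact ⟨Triad.maj (x + 4), ⟨Triad.min (x + 4), rfl, rfl⟩, show x + 8 = x + 4 + 4 by ring⟩
    case min.maj y x =>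
      replace h : y = x + 8 := h
      subst h
      exact ⟨Triad.min (x + 4), ⟨Triad.maj (x + 4), show x + 8 = x + 4 + 4 by ring, rfl⟩, rfl⟩
    case aug.aug a b =>
      replace h : a = b := h
      subst h
      exact ⟨Triad.aug a, ⟨Triad.aug a, rfl, rfl⟩, rfl⟩

lemma PLP_eq_Q : P * L * P = Q := by
  funext p q
  apply propext
  constructor
  · rintro ⟨r, ⟨s, h1, h2⟩, h3⟩
    cases p <;> cases s <;> cases r <;> cases q <;>
      first
        | exact h1.elim | exact h2.elim | exact h3.elim
        | (simp only [L, P, Q] at h1 h2 h3 ⊢; subst_vars;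
           first | ring1 | (ring_nf; rw [z12, zero_add]))
  · intro h
    cases p <;> cases q <;> try exact h.elim
    case maj.min x y =>
      replace h : y = x + 8 := h
      subst h
      exact ⟨Triad.maj (x + 8), ⟨Triad.min x, rfl,
        show x = x + 8 + 4 by ring_nf; simp [z12]⟩, rfl⟩
    case min.maj y x =>
      replace h : y = x + 8 := h
      subst h
      exact ⟨Triad.min x, ⟨Triad.maj (x + 8), rfl,
        show x = x + 8 + 4 by ring_nf; simp [z12]⟩, rfl⟩
    case aug.aug a b =>
      replace h : a = b := h
      subst h
      exact ⟨Triad.aug a, ⟨Triad.aug a, rfl, rfl⟩, rfl⟩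

/-- `P·P = 1`, `L·L = 1`, and `L·P·L = P·L·P`. -/
theorem PL_relations : P * P = 1 ∧ L * L = 1 ∧ L * P * L = P * L * P := by
  refine ⟨?_, ?_, ?_⟩
  · funext p q
    apply propext
    constructor
    · rintro ⟨r, h1, h2⟩
      cases p <;> cases r <;> cases q <;>
        first
          | exact h1.elim | exact h2.elim
          | (simp only [P, one_def] at h1 h2 ⊢; subst_vars; rfl)
    · rintro rfl
      show ∃ r, P p r ∧ P r p
      cases p with
      | maj x => exact ⟨Triad.min x, rfl, rfl⟩
      | min x => exact ⟨Triad.maj x, rfl, rfl⟩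
      | aug a => exact ⟨Triad.aug a, rfl, rfl⟩
  · funext p q
    apply propext
    constructor
    · rintro ⟨r, h1, h2⟩
      cases p <;> cases r <;> cases q <;>
        first
          | exact h1.elim | exact h2.elim
          | (simp only [L, one_def] at h1 h2 ⊢; subst_vars;
             first
               | rfl
               | (congr 1;
                  first | exact add_right_cancel ‹_› | exact (add_right_cancel ‹_›).symm))
    · rintro rfl
      show ∃ r, L p r ∧ L r p
      cases p with
      | maj x => exact ⟨Triad.min (x + 4), rfl, rfl⟩
      | min x =>
          exact ⟨Triad.maj (x - 4), show x = x - 4 + 4 by ring, show x = x - 4 + 4 by ring⟩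
      | aug a => exact ⟨Triad.aug a, rfl, rfl⟩
  · rw [LPL_eq_Q, PLP_eq_Q]

end CubeDance
end

section
/- Under relational composition on X one has U·U·U = U. -/
namespace CubeDance

lemma U_symm {p q : Triad} (h : U p q) : U q p := by
  cases p <;> cases q <;> simp_all [U]

/-- `U·U·U = U`. -/
theorem U_cubed : U * U * U = U := by
  show (fun p q => ∃ r, (∃ s, U p s ∧ U s r) ∧ U r q) = U
  funext p q
  apply propext
  constructor
  · rintro ⟨r, ⟨s, h1, h2⟩, h3⟩
    cases p <;> cases s <;> cases r <;> cases q <;> simp_all [U]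
  · intro h
    exact ⟨p, ⟨q, h, U_symm h⟩, h⟩

end CubeDance
end

section
/- Under relational composition on X one has U·P = U·L and P·U = L·U. -/
namespace CubeDance

lemma mul_def (R S : RelM) (p q : Triad) : (R * S) p q ↔ ∃ r, R p r ∧ S r q :=
  Iff.rfl

lemma key (x : ZMod 12) : ((x + 4).val : ZMod 4) = (x.val : ZMod 4) := by
  revert x; decide

/-- `U·P = U·L` and `P·U = L·U`. -/
theorem UP_eq_UL : U * P = U * L ∧ P * U = L * U := by
  constructor <;> funext p q <;> apply propext <;>
    rw [mul_def, mul_def] <;> constructor <;>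
    rintro ⟨r, h1, h2⟩ <;>
    cases p <;> cases q <;> cases r <;>
    first
      | exact h1.elim
      | exact h2.elim
      | exact ⟨_, h1, h2⟩
      | skip
  case left.mp.aug.maj.min a y x =>
    replace h1 : (x.val : ZMod 4) = a + 1 := h1
    replace h2 : x = y := h2
    refine ⟨.min (y + 4), ?_, ?_⟩
    · show ((y + 4).val : ZMod 4) = a + 1
      rw [key, ← h2]; exact h1
    · show y + 4 = y + 4; rfl
  case left.mp.aug.min.maj a y x =>
    replace h1 : (x.val : ZMod 4) = a := h1
    replace h2 : x = y := h2
    refine ⟨.maj (y - 4), ?_, ?_⟩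
    · show ((y - 4).val : ZMod 4) = a
      have := key (y - 4); rw [show y - 4 + 4 = y by ring] at this
      rw [← this, ← h2]; exact h1
    · show y = y - 4 + 4; ring
  case left.mpr.aug.maj.min a y x =>
    replace h1 : (x.val : ZMod 4) = a + 1 := h1
    replace h2 : x = y + 4 := h2
    refine ⟨.min y, ?_, ?_⟩
    · show (y.val : ZMod 4) = a + 1
      rw [← key, ← h2]; exact h1
    · show y = y; rfl
  case left.mpr.aug.min.maj a y x =>
    replace h1 : (x.val : ZMod 4) = a := h1
    replace h2 : y = x + 4 := h2
    refine ⟨.maj y, ?_, ?_⟩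
    · show (y.val : ZMod 4) = a
      rw [h2, key]; exact h1
    · show y = y; rfl
  case right.mp.maj.aug.min x a y =>
    replace h1 : x = y := h1
    replace h2 : (y.val : ZMod 4) = a + 1 := h2
    refine ⟨.min (x + 4), ?_, ?_⟩
    · show x + 4 = x + 4; rfl
    · show ((x + 4).val : ZMod 4) = a + 1
      rw [key, h1]; exact h2
  case right.mp.min.aug.maj x a y =>
    replace h1 : x = y := h1
    replace h2 : (y.val : ZMod 4) = a := h2
    refine ⟨.maj (x - 4), ?_, ?_⟩
    · show x = x - 4 + 4; ring
    · show ((x - 4).val : ZMod 4) = a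
      have := key (x - 4); rw [show x - 4 + 4 = x by ring] at this
      rw [← this, h1]; exact h2
  case right.mp.aug.maj.aug a y b =>
    exact ⟨.aug b, (h1 : a = b), h2⟩
  case right.mp.aug.min.aug a y b =>
    exact ⟨.aug b, (h1 : a = b), h2⟩
  case right.mpr.maj.aug.min x a y =>
    replace h1 : y = x + 4 := h1
    replace h2 : (y.val : ZMod 4) = a + 1 := h2
    refine ⟨.min x, ?_, ?_⟩
    · show x = x; rfl
    · show (x.val : ZMod 4) = a + 1
      rw [← key, ← h1]; exact h2
  case right.mpr.min.aug.maj x a y =>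
    replace h1 : x = y + 4 := h1
    replace h2 : (y.val : ZMod 4) = a := h2
    refine ⟨.maj x, ?_, ?_⟩
    · show x = x; rfl
    · show (x.val : ZMod 4) = a
      rw [h1, key]; exact h2
  case right.mpr.aug.maj.aug a y b =>
    exact ⟨.aug b, (h1 : a = b), h2⟩
  case right.mpr.aug.min.aug a y b =>
    exact ⟨.aug b, (h1 : a = b), h2⟩

end CubeDance
end

section
/- Under relational composition on X one has U²·P·U² = P·U²·P·U²·P, where U² denotes U·U. -/
namespace CubeDance

instance : Fintype Triad :=
  ⟨Finset.univ.image Triad.maj ∪ Finset.univ.image Triad.min ∪ Finset.univ.image Triad.aug,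
   by rintro (x|x|x) <;> simp⟩

instance : DecidableRel U := fun p q => by
  cases p <;> cases q <;> unfold U <;> infer_instance

instance : DecidableRel P := fun p q => by
  cases p <;> cases q <;> unfold P <;> infer_instance

instance mulDec {R S : RelM} [DecidableRel R] [DecidableRel S] : DecidableRel (R * S) :=
  fun p q => decidable_of_iff (∃ r, R p r ∧ S r q) Iff.rfl

lemma rel_eq_of_iff {R S : RelM} (h : ∀ p q, R p q ↔ S p q) : R = S :=
  funext fun p => funext fun q => propext (h p q)

/-- residue mod 4 -/
def r12 (x : ZMod 12) : ZMod 4 := (x.val : ZMod 4)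

def A : RelM := fun p q =>
  match p, q with
  | .maj x, .maj y => r12 y = r12 x
  | .maj x, .min y => r12 y = r12 x + 1
  | .min x, .maj y => r12 y = r12 x + 3
  | .min x, .min y => r12 y = r12 x
  | .aug a, .aug b => a = b
  | _, _ => False

def B : RelM := fun p q =>
  match p, q with
  | .maj x, .maj y => r12 y = r12 x + 1
  | .maj x, .min y => r12 y = r12 x
  | .min x, .maj y => r12 y = r12 x
  | .min x, .min y => r12 y = r12 x + 3
  | .aug a, .aug b => a = b
  | _, _ => False

def C : RelM := fun p q =>
  match p, q with
  | .maj x, .maj y => r12 y = r12 x + 1 ∨ r12 y = r12 x + 3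
  | .maj x, .min y => r12 y = r12 x ∨ r12 y = r12 x + 2
  | .min x, .maj y => r12 y = r12 x ∨ r12 y = r12 x + 2
  | .min x, .min y => r12 y = r12 x + 1 ∨ r12 y = r12 x + 3
  | .aug a, .aug b => a = b
  | _, _ => False

def D : RelM := fun p q =>
  match p, q with
  | .maj x, .maj y => r12 y = r12 x + 3
  | .maj x, .min y => r12 y = r12 x
  | .min x, .maj y => r12 y = r12 x
  | .min x, .min y => r12 y = r12 x + 1
  | .aug a, .aug b => a = b
  | _, _ => False

def E : RelM := fun p q =>
  match p, q with
  | .maj x, .maj y => r12 y = r12 x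
  | .maj x, .min y => r12 y = r12 x + 3
  | .min x, .maj y => r12 y = r12 x + 1
  | .min x, .min y => r12 y = r12 x
  | .aug a, .aug b => a = b
  | _, _ => False

def F : RelM := fun p q =>
  match p, q with
  | .maj x, .maj y => r12 y = r12 x ∨ r12 y = r12 x + 2
  | .maj x, .min y => r12 y = r12 x + 1 ∨ r12 y = r12 x + 3
  | .min x, .maj y => r12 y = r12 x + 1 ∨ r12 y = r12 x + 3
  | .min x, .min y => r12 y = r12 x ∨ r12 y = r12 x + 2
  | .aug a, .aug b => a = b
  | _, _ => False

instance : DecidableRel A := fun p q => by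
  cases p <;> cases q <;> unfold A <;> infer_instance
instance : DecidableRel B := fun p q => by
  cases p <;> cases q <;> unfold B <;> infer_instance
instance : DecidableRel C := fun p q => by
  cases p <;> cases q <;> unfold C <;> infer_instance
instance : DecidableRel D := fun p q => by
  cases p <;> cases q <;> unfold D <;> infer_instance
instance : DecidableRel E := fun p q => by
  cases p <;> cases q <;> unfold E <;> infer_instance
instance : DecidableRel F := fun p q => by
  cases p <;> cases q <;> unfold F <;> infer_instance

lemma hA : U * U = A := rel_eq_of_iff (by decide)
lemma hB : A * P = B := rel_eq_of_iff (by decide)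
lemma hC : B * A = C := rel_eq_of_iff (by decide)
lemma hD : P * A = D := rel_eq_of_iff (by decide)
lemma hE : D * P = E := rel_eq_of_iff (by decide)
lemma hF : E * A = F := rel_eq_of_iff (by decide)
lemma hG : F * P = C := rel_eq_of_iff (by decide)

/-- `U²·P·U² = P·U²·P·U²·P`. -/
theorem U2PU2 : U ^ 2 * P * U ^ 2 = P * U ^ 2 * P * U ^ 2 * P := by
  rw [pow_two, hA, hB, hC, hD, hE, hF, hG]

end CubeDance
end

section
/- Under relational composition on X one has (U·P)²·U² = P·(U·P)²·U²·P and U²·(P·U)² = P·U²·(P·U)²·P, where squares denote repeated relational composition. -/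
namespace CubeDance

deriving instance Fintype for Triad

instance inst_s5 : DecidableRel U := fun p q => by
  cases p <;> cases q <;> unfold U <;> exact inferInstance

instance inst_s5_2 : DecidableRel P := fun p q => by
  cases p <;> cases q <;> unfold P <;> exact inferInstance

def idx : Triad → Nat
  | .maj x => x.val
  | .min x => 12 + x.val
  | .aug a => 24 + a.val

def allT : List Triad :=
  ((List.range 12).map fun n => Triad.maj (n : ZMod 12)) ++
  ((List.range 12).map fun n => Triad.min (n : ZMod 12)) ++
  ((List.range 4).map fun n => Triad.aug (n : ZMod 4))

lemma mem_allT : ∀ t, t ∈ allT := by decide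

def tbl (rows : List Nat) : Triad → Triad → Bool :=
  fun p q => Nat.testBit (rows.getD (idx p) 0) (idx q)

def compB (f g : Triad → Triad → Bool) : Triad → Triad → Bool :=
  fun p q => allT.any fun r => f p r && g r q

lemma mul_iff {R S : RelM} {f g : Triad → Triad → Bool}
    (hR : ∀ p q, R p q ↔ f p q = true) (hS : ∀ p q, S p q ↔ g p q = true)
    (p q : Triad) : (R * S) p q ↔ compB f g p q = true := by
  show (∃ r, R p r ∧ S r q) ↔ _
  constructor
  · rintro ⟨r, h1, h2⟩
    simp only [compB, List.any_eq_true]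
    exact ⟨r, mem_allT r, by rw [Bool.and_eq_true]; exact ⟨(hR _ _).1 h1, (hS _ _).1 h2⟩⟩
  · intro h
    simp only [compB, List.any_eq_true, Bool.and_eq_true] at h
    obtain ⟨r, -, h1, h2⟩ := h
    exact ⟨r, (hR _ _).2 h1, (hS _ _).2 h2⟩

lemma stepc {R S : RelM} {f g h : Triad → Triad → Bool}
    (hR : ∀ p q, R p q ↔ f p q = true) (hS : ∀ p q, S p q ↔ g p q = true)
    (hc : ∀ p q, compB f g p q = h p q) :
    ∀ p q, (R * S) p q ↔ h p q = true := fun p q => by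
  rw [← hc]; exact mul_iff hR hS p q

lemma rel_eq {R S : RelM} {f : Triad → Triad → Bool}
    (hR : ∀ p q, R p q ↔ f p q = true) (hS : ∀ p q, S p q ↔ f p q = true) : R = S := by
  funext p q
  exact propext ((hR p q).trans (hS p q).symm)

def rU : List Nat := [16777216, 33554432, 67108864, 134217728, 16777216, 33554432, 67108864, 134217728, 16777216, 33554432, 67108864, 134217728, 134217728, 16777216, 33554432, 67108864, 134217728, 16777216, 33554432, 67108864, 134217728, 16777216, 33554432, 67108864, 2236689, 4473378, 8946756, 1120392]
def rP : List Nat := [4096, 8192, 16384, 32768, 65536, 131072, 262144, 524288, 1048576, 2097152, 4194304, 8388608, 1, 2, 4, 8, 16, 32, 64, 128, 256, 512, 1024, 2048, 16777216, 33554432, 67108864, 134217728]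
def rUP : List Nat := [16777216, 33554432, 67108864, 134217728, 16777216, 33554432, 67108864, 134217728, 16777216, 33554432, 67108864, 134217728, 134217728, 16777216, 33554432, 67108864, 134217728, 16777216, 33554432, 67108864, 134217728, 16777216, 33554432, 67108864, 1118754, 2237508, 4475016, 8945937]
def rUP2 : List Nat := [1118754, 2237508, 4475016, 8945937, 1118754, 2237508, 4475016, 8945937, 1118754, 2237508, 4475016, 8945937, 8945937, 1118754, 2237508, 4475016, 8945937, 1118754, 2237508, 4475016, 8945937, 1118754, 2237508, 4475016, 167772160, 83886080, 167772160, 83886080]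
def rUU : List Nat := [2236689, 4473378, 8946756, 1120392, 2236689, 4473378, 8946756, 1120392, 2236689, 4473378, 8946756, 1120392, 1120392, 2236689, 4473378, 8946756, 1120392, 2236689, 4473378, 8946756, 1120392, 2236689, 4473378, 8946756, 16777216, 33554432, 67108864, 134217728]
def rA1 : List Nat := [5593770, 11183445, 5593770, 11183445, 5593770, 11183445, 5593770, 11183445, 5593770, 11183445, 5593770, 11183445, 11183445, 5593770, 11183445, 5593770, 11183445, 5593770, 11183445, 5593770, 11183445, 5593770, 11183445, 5593770, 167772160, 83886080, 167772160, 83886080]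
def rB1 : List Nat := [8945937, 1118754, 2237508, 4475016, 8945937, 1118754, 2237508, 4475016, 8945937, 1118754, 2237508, 4475016, 1118754, 2237508, 4475016, 8945937, 1118754, 2237508, 4475016, 8945937, 1118754, 2237508, 4475016, 8945937, 167772160, 83886080, 167772160, 83886080]
def rB2 : List Nat := [11183445, 5593770, 11183445, 5593770, 11183445, 5593770, 11183445, 5593770, 11183445, 5593770, 11183445, 5593770, 5593770, 11183445, 5593770, 11183445, 5593770, 11183445, 5593770, 11183445, 5593770, 11183445, 5593770, 11183445, 167772160, 83886080, 167772160, 83886080]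
def rPU : List Nat := [134217728, 16777216, 33554432, 67108864, 134217728, 16777216, 33554432, 67108864, 134217728, 16777216, 33554432, 67108864, 16777216, 33554432, 67108864, 134217728, 16777216, 33554432, 67108864, 134217728, 16777216, 33554432, 67108864, 134217728, 2236689, 4473378, 8946756, 1120392]
def rPU2 : List Nat := [1120392, 2236689, 4473378, 8946756, 1120392, 2236689, 4473378, 8946756, 1120392, 2236689, 4473378, 8946756, 2236689, 4473378, 8946756, 1120392, 2236689, 4473378, 8946756, 1120392, 2236689, 4473378, 8946756, 1120392, 167772160, 83886080, 167772160, 83886080]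
def rA2 : List Nat := [5593770, 11183445, 5593770, 11183445, 5593770, 11183445, 5593770, 11183445, 5593770, 11183445, 5593770, 11183445, 11183445, 5593770, 11183445, 5593770, 11183445, 5593770, 11183445, 5593770, 11183445, 5593770, 11183445, 5593770, 167772160, 83886080, 167772160, 83886080]
def rC1 : List Nat := [1120392, 2236689, 4473378, 8946756, 1120392, 2236689, 4473378, 8946756, 1120392, 2236689, 4473378, 8946756, 2236689, 4473378, 8946756, 1120392, 2236689, 4473378, 8946756, 1120392, 2236689, 4473378, 8946756, 1120392, 16777216, 33554432, 67108864, 134217728]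
def rC2 : List Nat := [11183445, 5593770, 11183445, 5593770, 11183445, 5593770, 11183445, 5593770, 11183445, 5593770, 11183445, 5593770, 5593770, 11183445, 5593770, 11183445, 5593770, 11183445, 5593770, 11183445, 5593770, 11183445, 5593770, 11183445, 167772160, 83886080, 167772160, 83886080]


lemma hU : ∀ p q, U p q ↔ tbl rU p q = true := by decide
lemma hP : ∀ p q, P p q ↔ tbl rP p q = true := by decide

lemma hUP : ∀ p q, (U * P) p q ↔ tbl rUP p q = true :=
  stepc hU hP (by decide)
lemma hUP2 : ∀ p q, ((U * P) * (U * P)) p q ↔ tbl rUP2 p q = true :=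
  stepc hUP hUP (by decide)
lemma hUU : ∀ p q, (U * U) p q ↔ tbl rUU p q = true :=
  stepc hU hU (by decide)
lemma hA1 : ∀ p q, (((U * P) * (U * P)) * (U * U)) p q ↔ tbl rA1 p q = true :=
  stepc hUP2 hUU (by decide)
lemma hB1 : ∀ p q, (P * ((U * P) * (U * P))) p q ↔ tbl rB1 p q = true :=
  stepc hP hUP2 (by decide)
lemma hB2 : ∀ p q, ((P * ((U * P) * (U * P))) * (U * U)) p q ↔ tbl rB2 p q = true :=
  stepc hB1 hUU (by decide)
lemma hB3 : ∀ p q, (((P * ((U * P) * (U * P))) * (U * U)) * P) p q ↔ tbl rA1 p q = true :=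
  stepc hB2 hP (by decide)
lemma hPU : ∀ p q, (P * U) p q ↔ tbl rPU p q = true :=
  stepc hP hU (by decide)
lemma hPU2 : ∀ p q, ((P * U) * (P * U)) p q ↔ tbl rPU2 p q = true :=
  stepc hPU hPU (by decide)
lemma hA2 : ∀ p q, ((U * U) * ((P * U) * (P * U))) p q ↔ tbl rA2 p q = true :=
  stepc hUU hPU2 (by decide)
lemma hC1 : ∀ p q, (P * (U * U)) p q ↔ tbl rC1 p q = true :=
  stepc hP hUU (by decide)
lemma hC2 : ∀ p q, ((P * (U * U)) * ((P * U) * (P * U))) p q ↔ tbl rC2 p q = true :=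
  stepc hC1 hPU2 (by decide)
lemma hC3 : ∀ p q, (((P * (U * U)) * ((P * U) * (P * U))) * P) p q ↔ tbl rA2 p q = true :=
  stepc hC2 hP (by decide)

/-- `(U·P)²·U² = P·(U·P)²·U²·P` and `U²·(P·U)² = P·U²·(P·U)²·P`. -/
theorem UPsq_relations :
    (U * P) ^ 2 * U ^ 2 = P * (U * P) ^ 2 * U ^ 2 * P ∧
    U ^ 2 * (P * U) ^ 2 = P * U ^ 2 * (P * U) ^ 2 * P := by
  constructor
  · show (U * P) ^ 2 * U ^ 2 = P * (U * P) ^ 2 * U ^ 2 * P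
    rw [pow_two, pow_two]
    exact rel_eq hA1 hB3
  · show U ^ 2 * (P * U) ^ 2 = P * U ^ 2 * (P * U) ^ 2 * P
    rw [pow_two, pow_two]
    exact rel_eq hA2 hC3

end CubeDance
end

section
/- The submonoid of M_{U,P,L} generated by the two relations P and L is a group of order 6 isomorphic to the dihedral group of order 6 (equivalently, to the symmetric group S₃). -/
namespace CubeDance

/-- Shift amount: `i : ZMod 3` corresponds to `4*i : ZMod 12`. -/
def c (i : ZMod 3) : ZMod 12 := 4 * i.val

lemma c_add : ∀ i j : ZMod 3, c (i + j) = c i + c j := by decide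

lemma c_sub : ∀ i j : ZMod 3, c (i - j) = c i - c j := by decide

lemma c0 : c 0 = 0 := by decide
lemma c1 : c 1 = 4 := by decide

lemma c_inj {i j : ZMod 3} (h : c i = c j) : i = j := by revert h; revert i j; decide

/-- The right action of the dihedral group on triads. -/
def act : DihedralGroup 3 → Triad → Triad
  | .r i => fun p =>
      match p with
      | .maj x => .maj (x - c i)
      | .min x => .min (x + c i)
      | .aug a => .aug a
  | .sr i => fun p =>
      match p with
      | .maj x => .min (x + c i)
      | .min x => .maj (x - c i)
      | .aug a => .aug a

lemma act_one (p : Triad) : act 1 p = p := by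
  show act (.r 0) p = p
  cases p <;> simp [act, c0]

lemma act_mul (d1 d2 : DihedralGroup 3) (p : Triad) :
    act (d1 * d2) p = act d2 (act d1 p) := by
  cases d1 <;> cases d2 <;> cases p <;>
    simp [act, DihedralGroup.r_mul_r, DihedralGroup.r_mul_sr,
      DihedralGroup.sr_mul_r, DihedralGroup.sr_mul_sr, c_add, c_sub] <;>
    ring

/-- The homomorphism from the dihedral group into relations. -/
def φ : DihedralGroup 3 →* RelM where
  toFun d := fun p q => act d p = q
  map_one' := by
    show (fun p q => act 1 p = q) = fun p q => p = q
    funext p q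
    rw [act_one]
  map_mul' d1 d2 := by
    show (fun p q => act (d1 * d2) p = q)
      = fun p q => ∃ r, act d1 p = r ∧ act d2 r = q
    funext p q
    apply propext
    constructor
    · intro h
      exact ⟨act d1 p, rfl, by rw [← act_mul]; exact h⟩
    · rintro ⟨r, rfl, h2⟩
      rw [act_mul]; exact h2

lemma φ_inj : Function.Injective φ := by
  intro d1 d2 h
  have h0 : act d1 (Triad.maj 0) = act d2 (Triad.maj 0) := by
    have := congrFun (congrFun h (Triad.maj 0)) (act d1 (Triad.maj 0))
    exact (this.mp rfl).symm
  cases d1 with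
  | r i => cases d2 with
    | r j => simp only [act, Triad.maj.injEq] at h0
             exact congrArg _ (c_inj (by linear_combination -h0))
    | sr j => simp [act] at h0
  | sr i => cases d2 with
    | r j => simp [act] at h0
    | sr j => simp only [act, Triad.min.injEq] at h0
              exact congrArg _ (c_inj (by linear_combination h0))

lemma φ_sr0 : φ (.sr 0) = P := by
  funext p q
  apply propext
  cases p <;> cases q <;> simp [φ, act, P, c0, eq_comm]

lemma φ_sr1 : φ (.sr 1) = L := by
  funext p q
  apply propext
  cases p <;> cases q <;> simp [φ, act, L, c1, eq_comm] <;>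
    constructor <;> (rintro rfl; ring)

lemma mrange_eq : MonoidHom.mrange φ = Submonoid.closure {P, L} := by
  apply le_antisymm
  · rintro x ⟨d, rfl⟩
    have hP : P ∈ Submonoid.closure {P, L} :=
      Submonoid.subset_closure (Set.mem_insert _ _)
    have hL : L ∈ Submonoid.closure {P, L} :=
      Submonoid.subset_closure (Set.mem_insert_of_mem _ rfl)
    have key : ∀ d' : DihedralGroup 3, φ d' ∈ Submonoid.closure {P, L} := by
      intro d'
      have e1 : (DihedralGroup.r 1 : DihedralGroup 3) = .sr 0 * .sr 1 := by decide
      have e2 : (DihedralGroup.r 2 : DihedralGroup 3) = .sr 1 * .sr 0 := by decide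
      have e3 : (DihedralGroup.sr 2 : DihedralGroup 3) = .sr 1 * (.sr 0 * .sr 1) := by
        decide
      have e0 : (DihedralGroup.r 0 : DihedralGroup 3) = 1 := rfl
      have h3 : ∀ i : ZMod 3, i = 0 ∨ i = 1 ∨ i = 2 := by decide
      match d' with
      | .r i =>
        rcases h3 i with rfl | rfl | rfl
        · rw [e0, map_one]; exact one_mem _
        · rw [e1, map_mul, φ_sr0, φ_sr1]; exact mul_mem hP hL
        · rw [e2, map_mul, φ_sr0, φ_sr1]; exact mul_mem hL hP
      | .sr i =>
        rcases h3 i with rfl | rfl | rfl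
        · rw [φ_sr0]; exact hP
        · rw [φ_sr1]; exact hL
        · rw [e3, map_mul, map_mul, φ_sr0, φ_sr1]; exact mul_mem hL (mul_mem hP hL)
    exact key d
  · rw [Submonoid.closure_le]
    rintro x (rfl | rfl)
    · exact ⟨.sr 0, φ_sr0⟩
    · exact ⟨.sr 1, φ_sr1⟩

/-- The submonoid generated by `P` and `L` is a group of order 6 isomorphic to the
dihedral group of order 6 (equivalently, the symmetric group `S₃`). -/
theorem PL_submonoid_dihedral :
    Nat.card (Submonoid.closure {P, L} : Submonoid RelM) = 6 ∧
    Nonempty ((Submonoid.closure {P, L} : Submonoid RelM) ≃* DihedralGroup 3) := by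

  have e : DihedralGroup 3 ≃* (Submonoid.closure {P, L} : Submonoid RelM) := by
    rw [← mrange_eq]
    exact MulEquiv.ofLeftInverse' φ (Function.leftInverse_invFun φ_inj)
  constructor
  · rw [Nat.card_congr e.symm.toEquiv, Nat.card_eq_fintype_card, DihedralGroup.card]
  · exact ⟨e.symm⟩


end CubeDance
end
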